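/- Boolean Independence Theorem: Let (A, Pr) be a finitary probability space, n ∈ ℕ, t and u be Boolean terms all of whose variables are among X 1, …, X n, and a_1, …, a_{2n} be events in A such that the tuple (a_1, …, a_n) is independent of the tuple (a_{n+1}, …, a_{2n}). Then the two events a := Φ_A(t; a_1, …, a_n) and b := Φ_A(u; a_{n+1}, …, a_{2n}) are independent: Pr(a ⊓ b) = Pr(a) · Pr(b). -/
import Mathlib


/-- Boolean terms (formulas). -/
inductive BT where
  | X : ℕ → BT
  | zero : BT
  | one : BT
  | or : BT → BT → BT
  | and : BT → BT → BT
  | not : BT → BT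

namespace BT

/-- The evaluation map `Φ_A` of a Boolean term in a Boolean algebra `A`
under an assignment `v : ℕ → A` of the variables. -/
def eval {A : Type*} [BooleanAlgebra A] (v : ℕ → A) : BT → A
  | X i => v i
  | zero => ⊥
  | one => ⊤
  | or t u => eval v t ⊔ eval v u
  | and t u => eval v t ⊓ eval v u
  | not t => (eval v t)ᶜ

/-- One-step Boolean transformation: the nineteen rules BT1–BT19, closed
under the term-forming operations (compatible closure). -/
inductive Step : BT → BT → Prop where
  | bt1 (u : BT) : Step (and zero u) zero
  | bt2 (u : BT) : Step (or zero u) u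
  | bt3 (u : BT) : Step (and one u) u
  | bt4 (u : BT) : Step (or one u) one
  | bt5 (u : BT) : Step (and u (not u)) zero
  | bt6 (u : BT) : Step (or u (not u)) one
  | bt7 (u u' : BT) : Step (or u u') (or u' u)
  | bt8 (u u' : BT) : Step (and u u') (and u' u)
  | bt9 (u u' u'' : BT) : Step (or u (or u' u'')) (or (or u u') u'')
  | bt10 (u u' u'' : BT) : Step (and u (and u' u'')) (and (and u u') u'')
  | bt11 (u : BT) : Step (or u u) u
  | bt12 (u : BT) : Step (and u u) u
  | bt13 (u u' u'' : BT) : Step (or u (and u' u'')) (and (or u u') (or u u''))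
  | bt14 (u u' u'' : BT) : Step (and u (or u' u'')) (or (and u u') (and u u''))
  | bt15 (u u' : BT) : Step (or u (and u u')) u
  | bt16 (u u' : BT) : Step (and u (or u u')) u
  | bt17 (u : BT) : Step (not (not u)) u
  | bt18 (u u' : BT) : Step (not (or u u')) (and (not u) (not u'))
  | bt19 (u u' : BT) : Step (not (and u u')) (or (not u) (not u'))
  | orLeft {t t' : BT} (u : BT) : Step t t' → Step (or t u) (or t' u)
  | orRight (u : BT) {t t' : BT} : Step t t' → Step (or u t) (or u t')
  | andLeft {t t' : BT} (u : BT) : Step t t' → Step (and t u) (and t' u)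
  | andRight (u : BT) {t t' : BT} : Step t t' → Step (and u t) (and u t')
  | notCong {t t' : BT} : Step t t' → Step (not t) (not t')

/-- f-equivalence of Boolean terms: the equivalence closure of `Step`. -/
def FEq (t u : BT) : Prop := Relation.EqvGen Step t u

end BT

namespace BT

/-- The finite set of indices of variables occurring in a Boolean term. -/
def vars : BT → Finset ℕ
  | X i => {i}
  | zero => ∅
  | one => ∅
  | or t u => vars t ∪ vars u
  | and t u => vars t ∪ vars u
  | not t => vars t

end BT

/-- The tuple `a` is independent of the tuple `b` (in a finitary probability
space with probability map `Pr`): for all index sets `X`, `Y`,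
`Pr(⨅_{i∈X} a i ⊓ ⨅_{j∈Y} b j) = Pr(⨅_{i∈X} a i) · Pr(⨅_{j∈Y} b j)`,
the empty meet being `⊤`. -/
def IndepTuples {A : Type*} [BooleanAlgebra A] (Pr : A → ℝ)
    {I J : Type*} (a : I → A) (b : J → A) : Prop :=
  ∀ (X : Finset I) (Y : Finset J),
    Pr (X.inf a ⊓ Y.inf b) = Pr (X.inf a) * Pr (Y.inf b)

namespace BoolIndepAux

variable {A : Type*} [BooleanAlgebra A]

/-- Probability of complement-intersection. -/
theorem pr_compl_inf (Pr : A → ℝ) (hbot : Pr ⊥ = 0)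
    (hadd : ∀ a b : A, Pr (a ⊔ b) = Pr a + Pr b - Pr (a ⊓ b)) (x c : A) :
    Pr (xᶜ ⊓ c) = Pr c - Pr (x ⊓ c) := by
  have h1 : (x ⊓ c) ⊔ (xᶜ ⊓ c) = c := by
    rw [← inf_sup_right, sup_compl_eq_top, top_inf_eq]
  have h2 : (x ⊓ c) ⊓ (xᶜ ⊓ c) = ⊥ := by
    rw [inf_inf_inf_comm, inf_compl_eq_bot, bot_inf_eq]
  have := hadd (x ⊓ c) (xᶜ ⊓ c)
  rw [h1, h2, hbot] at this; linarith

/-- Finite additivity on pairwise disjoint families. -/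
theorem pr_sup_disjoint (Pr : A → ℝ) (hbot : Pr ⊥ = 0)
    (hadd : ∀ a b : A, Pr (a ⊔ b) = Pr a + Pr b - Pr (a ⊓ b))
    {ι : Type*} [DecidableEq ι] (F : Finset ι) (e : ι → A)
    (h : ∀ i ∈ F, ∀ j ∈ F, i ≠ j → e i ⊓ e j = ⊥) :
    Pr (F.sup e) = ∑ i ∈ F, Pr (e i) := by
  induction F using Finset.induction with
  | empty => simpa using hbot
  | @insert i F hi ih =>
    have hdisj : e i ⊓ F.sup e = ⊥ := by
      rw [Finset.sup_inf_distrib_left]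
      refine (Finset.sup_eq_bot_iff _ _).2 fun j hj => ?_
      exact h i (Finset.mem_insert_self i F) j (Finset.mem_insert_of_mem hj)
        (fun hij => hi (hij ▸ hj))
    rw [Finset.sup_insert, hadd, hdisj, hbot, Finset.sum_insert hi,
      ih (fun x hx y hy => h x (Finset.mem_insert_of_mem hx) y (Finset.mem_insert_of_mem hy))]
    ring

variable {n : ℕ}

/-- Signed event. -/
def sgn (a : Fin n → A) (S : Finset (Fin n)) (i : Fin n) : A :=
  if i ∈ S then a i else (a i)ᶜ

/-- Atom of the subalgebra generated by `a`. -/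
def atom (a : Fin n → A) (S : Finset (Fin n)) : A :=
  Finset.univ.inf (sgn a S)

theorem atom_le_of_mem (a : Fin n → A) {S : Finset (Fin n)} {j : Fin n} (hj : j ∈ S) :
    atom a S ≤ a j := by
  have := Finset.inf_le (f := sgn a S) (Finset.mem_univ j)
  rwa [sgn, if_pos hj] at this

theorem atom_le_of_not_mem (a : Fin n → A) {S : Finset (Fin n)} {j : Fin n} (hj : j ∉ S) :
    atom a S ≤ (a j)ᶜ := by
  have := Finset.inf_le (f := sgn a S) (Finset.mem_univ j)
  rwa [sgn, if_neg hj] at this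

theorem atom_disjoint (a : Fin n → A) {S T : Finset (Fin n)} (h : S ≠ T) :
    atom a S ⊓ atom a T = ⊥ := by
  obtain ⟨j, hj⟩ : ∃ j, (j ∈ S ∧ j ∉ T) ∨ (j ∉ S ∧ j ∈ T) := by
    by_contra hc
    push_neg at hc
    exact h (Finset.ext fun j => by have := hc j; tauto)
  rcases hj with ⟨h1, h2⟩ | ⟨h1, h2⟩
  · exact le_bot_iff.1 (le_trans (inf_le_inf (atom_le_of_mem a h1) (atom_le_of_not_mem a h2))
      (by rw [inf_compl_eq_bot]))
  · exact le_bot_iff.1 (le_trans (inf_le_inf (atom_le_of_not_mem a h1) (atom_le_of_mem a h2))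
      (by rw [compl_inf_eq_bot]))

theorem sup_powerset_sgn (a : Fin n → A) (J : Finset (Fin n)) :
    J.powerset.sup (fun S => J.inf (sgn a S)) = ⊤ := by
  induction J using Finset.induction with
  | empty => simp
  | @insert j J hj ih =>
    rw [Finset.powerset_insert, Finset.sup_union, Finset.sup_image]
    have h1 : ∀ S ∈ J.powerset, (insert j J).inf (sgn a S)
        = (a j)ᶜ ⊓ J.inf (sgn a S) := by
      intro S hS
      rw [Finset.inf_insert, sgn, if_neg (fun hc => hj (Finset.mem_powerset.1 hS hc))]
    have h2 : ∀ S ∈ J.powerset, ((fun S => (insert j J).inf (sgn a S)) ∘ insert j) S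
        = a j ⊓ J.inf (sgn a S) := by
      intro S hS
      show (insert j J).inf (sgn a (insert j S)) = _
      rw [Finset.inf_insert, sgn, if_pos (Finset.mem_insert_self j S)]
      congr 1
      refine Finset.inf_congr rfl fun i hi => ?_
      have hij : i ≠ j := fun hc => hj (hc ▸ hi)
      simp [sgn, Finset.mem_insert, hij]
    rw [Finset.sup_congr rfl h1, Finset.sup_congr rfl h2,
      ← Finset.sup_inf_distrib_left, ← Finset.sup_inf_distrib_left, ih,
      inf_top_eq, inf_top_eq, compl_sup_eq_top]

theorem sup_univ_atom (a : Fin n → A) :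
    (Finset.univ : Finset (Finset (Fin n))).sup (atom a) = ⊤ := by
  have := sup_powerset_sgn a (Finset.univ : Finset (Fin n))
  rwa [Finset.powerset_univ] at this


theorem indep_sgn (Pr : A → ℝ) (hbot : Pr ⊥ = 0)
    (hadd : ∀ a b : A, Pr (a ⊔ b) = Pr a + Pr b - Pr (a ⊓ b))
    (a b : Fin n → A)
    (hindep : ∀ (X Y : Finset (Fin n)), Pr (X.inf a ⊓ Y.inf b) = Pr (X.inf a) * Pr (Y.inf b)) :
    ∀ (X Y S T : Finset (Fin n)),
      Pr (X.inf (sgn a S) ⊓ Y.inf (sgn b T))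
        = Pr (X.inf (sgn a S)) * Pr (Y.inf (sgn b T)) := by
  suffices H : ∀ k (X Y S T : Finset (Fin n)), (X \ S).card + (Y \ T).card = k →
      Pr (X.inf (sgn a S) ⊓ Y.inf (sgn b T))
        = Pr (X.inf (sgn a S)) * Pr (Y.inf (sgn b T)) from
    fun X Y S T => H _ X Y S T rfl
  intro k
  induction k using Nat.strong_induction_on with
  | _ k ih =>
  intro X Y S T hk
  by_cases hXS : X ⊆ S
  · by_cases hYT : Y ⊆ T
    · have e1 : X.inf (sgn a S) = X.inf a :=
        Finset.inf_congr rfl fun i hi => by rw [sgn, if_pos (hXS hi)]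
      have e2 : Y.inf (sgn b T) = Y.inf b :=
        Finset.inf_congr rfl fun i hi => by rw [sgn, if_pos (hYT hi)]
      rw [e1, e2]; exact hindep X Y
    · -- flip on the Y side
      obtain ⟨i, hiY, hiT⟩ := Finset.not_subset.1 hYT
      set Y' := Y.erase i with hY'
      have eB : Y.inf (sgn b T) = (b i)ᶜ ⊓ Y'.inf (sgn b T) := by
        rw [← Finset.insert_erase hiY, Finset.inf_insert]
        simp [sgn, hiT, hY']
      have eB2 : Y'.inf (sgn b (insert i T)) = Y'.inf (sgn b T) :=
        Finset.inf_congr rfl fun j hj => by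
          have : j ≠ i := Finset.ne_of_mem_erase hj
          simp [sgn, Finset.mem_insert, this]
      have eB' : Y.inf (sgn b (insert i T)) = b i ⊓ Y'.inf (sgn b T) := by
        rw [← Finset.insert_erase hiY, Finset.inf_insert, sgn,
          if_pos (Finset.mem_insert_self i T)]
        rw [← hY', eB2]
      have hmem : i ∈ Y \ T := Finset.mem_sdiff.2 ⟨hiY, hiT⟩
      have hc1 : (Y' \ T).card < (Y \ T).card := by
        rw [hY', Finset.erase_sdiff_comm, Finset.card_erase_of_mem hmem]
        exact Nat.sub_lt (Finset.card_pos.2 ⟨i, hmem⟩) one_pos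
      have hc2 : (Y \ insert i T).card < (Y \ T).card := by
        rw [Finset.sdiff_insert, Finset.card_erase_of_mem hmem]
        exact Nat.sub_lt (Finset.card_pos.2 ⟨i, hmem⟩) one_pos
      have ih1 := ih ((X \ S).card + (Y' \ T).card) (by omega) X Y' S T rfl
      have ih2 := ih ((X \ S).card + (Y \ insert i T).card) (by omega) X Y S (insert i T) rfl
      rw [eB'] at ih2
      rw [eB, inf_left_comm,
        pr_compl_inf Pr hbot hadd (b i) (X.inf (sgn a S) ⊓ Y'.inf (sgn b T)),
        pr_compl_inf Pr hbot hadd (b i) (Y'.inf (sgn b T)), ih1, inf_left_comm, ih2]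
      ring
  · -- flip on the X side
    obtain ⟨i, hiX, hiS⟩ := Finset.not_subset.1 hXS
    set X' := X.erase i with hX'
    have eA : X.inf (sgn a S) = (a i)ᶜ ⊓ X'.inf (sgn a S) := by
      rw [← Finset.insert_erase hiX, Finset.inf_insert]
      simp [sgn, hiS, hX']
    have eA2 : X'.inf (sgn a (insert i S)) = X'.inf (sgn a S) :=
      Finset.inf_congr rfl fun j hj => by
        have : j ≠ i := Finset.ne_of_mem_erase hj
        simp [sgn, Finset.mem_insert, this]
    have eA' : X.inf (sgn a (insert i S)) = a i ⊓ X'.inf (sgn a S) := by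
      rw [← Finset.insert_erase hiX, Finset.inf_insert, sgn,
        if_pos (Finset.mem_insert_self i S)]
      rw [← hX', eA2]
    have hmem : i ∈ X \ S := Finset.mem_sdiff.2 ⟨hiX, hiS⟩
    have hc1 : (X' \ S).card < (X \ S).card := by
      rw [hX', Finset.erase_sdiff_comm, Finset.card_erase_of_mem hmem]
      exact Nat.sub_lt (Finset.card_pos.2 ⟨i, hmem⟩) one_pos
    have hc2 : (X \ insert i S).card < (X \ S).card := by
      rw [Finset.sdiff_insert, Finset.card_erase_of_mem hmem]
      exact Nat.sub_lt (Finset.card_pos.2 ⟨i, hmem⟩) one_pos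
    have ih1 := ih ((X' \ S).card + (Y \ T).card) (by omega) X' Y S T rfl
    have ih2 := ih ((X \ insert i S).card + (Y \ T).card) (by omega) X Y (insert i S) T rfl
    rw [eA'] at ih2
    rw [eA, inf_assoc,
      pr_compl_inf Pr hbot hadd (a i) (X'.inf (sgn a S) ⊓ Y.inf (sgn b T)),
      pr_compl_inf Pr hbot hadd (a i) (X'.inf (sgn a S)), ih1, ← inf_assoc, ih2]
    ring

theorem sup_filter_mem_atom (a : Fin n → A) (j : Fin n) :
    (Finset.univ.filter fun S : Finset (Fin n) => j ∈ S).sup (atom a) = a j := by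
  apply le_antisymm
  · exact Finset.sup_le fun S hS => atom_le_of_mem a (Finset.mem_filter.1 hS).2
  · conv_lhs => rw [← inf_top_eq (a j), ← sup_univ_atom a]
    rw [Finset.sup_inf_distrib_left]
    refine Finset.sup_le fun S _ => ?_
    by_cases hj : j ∈ S
    · exact le_trans inf_le_right (Finset.le_sup (Finset.mem_filter.2 ⟨Finset.mem_univ S, hj⟩))
    · have h2 : a j ⊓ atom a S ≤ a j ⊓ (a j)ᶜ := inf_le_inf_left _ (atom_le_of_not_mem a hj)
      rw [inf_compl_eq_bot] at h2
      exact le_trans h2 bot_le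

theorem sup_inter_atom (a : Fin n → A) (F G : Finset (Finset (Fin n))) :
    F.sup (atom a) ⊓ G.sup (atom a) = (F ∩ G).sup (atom a) := by
  apply le_antisymm
  · rw [Finset.sup_inf_sup]
    refine Finset.sup_le fun p hp => ?_
    rw [Finset.mem_product] at hp
    by_cases h : p.1 = p.2
    · rw [h, inf_idem]
      exact Finset.le_sup (Finset.mem_inter.2 ⟨h ▸ hp.1, hp.2⟩)
    · rw [atom_disjoint a h]; exact bot_le
  · exact le_inf (Finset.sup_mono Finset.inter_subset_left)
      (Finset.sup_mono Finset.inter_subset_right)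

theorem compl_sup_atom (a : Fin n → A) (F : Finset (Finset (Fin n))) :
    (F.sup (atom a))ᶜ = (Finset.univ \ F).sup (atom a) := by
  have hinf : F.sup (atom a) ⊓ (Finset.univ \ F).sup (atom a) = ⊥ := by
    rw [sup_inter_atom, Finset.inter_sdiff_self, Finset.sup_empty]
  have hsup : F.sup (atom a) ⊔ (Finset.univ \ F).sup (atom a) = ⊤ := by
    rw [← Finset.sup_union, Finset.union_sdiff_of_subset (Finset.subset_univ F),
      sup_univ_atom a]
  exact (IsCompl.of_eq hinf hsup).compl_eq

/-- Boolean assignment associated with `S`. -/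
def vbool (S : Finset (Fin n)) (i : ℕ) : Bool := decide (∃ j : Fin n, i = j.val + 1 ∧ j ∈ S)

theorem eval_normal (a : Fin n → A) (v : ℕ → A) (hv : ∀ i : Fin n, v (i.val + 1) = a i)
    (t : BT) (ht : t.vars ⊆ Finset.Icc 1 n) :
    BT.eval v t
      = (Finset.univ.filter fun S : Finset (Fin n) =>
          BT.eval (vbool S) t = true).sup (atom a) := by
  induction t with
  | X i =>
      have hi : i ∈ Finset.Icc 1 n := ht (by simp [BT.vars])
      rw [Finset.mem_Icc] at hi
      have hj : (⟨i - 1, by omega⟩ : Fin n).val + 1 = i := by simp; omega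
      set j : Fin n := ⟨i - 1, by omega⟩ with hjdef
      have hfil : (Finset.univ.filter fun S : Finset (Fin n) =>
          BT.eval (vbool S) (BT.X i) = true)
          = Finset.univ.filter fun S : Finset (Fin n) => j ∈ S := by
        refine Finset.filter_congr fun S _ => ?_
        show (vbool S i = true) ↔ _
        rw [← hj]
        simp only [vbool, decide_eq_true_eq]
        constructor
        · rintro ⟨j', hj', hmem⟩
          have : j = j' := Fin.ext (by omega)
          rwa [this]
        · exact fun h => ⟨j, rfl, h⟩
      rw [hfil, sup_filter_mem_atom]
      show v i = a j
      rw [← hj, hv]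
  | zero =>
      have : (Finset.univ.filter fun S : Finset (Fin n) =>
          BT.eval (vbool S) BT.zero = true) = ∅ := by
        refine Finset.filter_false_of_mem fun S _ => ?_
        show ¬((⊥ : Bool) = true)
        simp
      rw [this, Finset.sup_empty]; rfl
  | one =>
      have : (Finset.univ.filter fun S : Finset (Fin n) =>
          BT.eval (vbool S) BT.one = true) = Finset.univ := by
        refine Finset.filter_true_of_mem fun S _ => ?_
        show (⊤ : Bool) = true
        rfl
      rw [this, sup_univ_atom a]; rfl
  | or t u iht ihu =>
      have hsub : t.vars ⊆ Finset.Icc 1 n ∧ u.vars ⊆ Finset.Icc 1 n := by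
        rw [show (BT.or t u).vars = t.vars ∪ u.vars from rfl, Finset.union_subset_iff] at ht
        exact ht
      have hb : ∀ x y : Bool, x ⊔ y = (x || y) :=
        fun x y => congrFun (congrFun Bool.sup_eq_bor x) y
      have hfil : (Finset.univ.filter fun S : Finset (Fin n) =>
            BT.eval (vbool S) (BT.or t u) = true)
          = (Finset.univ.filter fun S => BT.eval (vbool S) t = true)
            ∪ (Finset.univ.filter fun S => BT.eval (vbool S) u = true) := by
        ext S
        simp only [Finset.mem_filter, Finset.mem_univ, true_and, Finset.mem_union]
        show (BT.eval (vbool S) t ⊔ BT.eval (vbool S) u) = true ↔ _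
        rw [hb, Bool.or_eq_true]
      show BT.eval v t ⊔ BT.eval v u = _
      rw [hfil, Finset.sup_union, iht hsub.1, ihu hsub.2]
  | and t u iht ihu =>
      have hsub : t.vars ⊆ Finset.Icc 1 n ∧ u.vars ⊆ Finset.Icc 1 n := by
        rw [show (BT.and t u).vars = t.vars ∪ u.vars from rfl, Finset.union_subset_iff] at ht
        exact ht
      have hb : ∀ x y : Bool, x ⊓ y = (x && y) :=
        fun x y => congrFun (congrFun Bool.inf_eq_band x) y
      have hfil : (Finset.univ.filter fun S : Finset (Fin n) =>
            BT.eval (vbool S) (BT.and t u) = true)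
          = (Finset.univ.filter fun S => BT.eval (vbool S) t = true)
            ∩ (Finset.univ.filter fun S => BT.eval (vbool S) u = true) := by
        ext S
        simp only [Finset.mem_filter, Finset.mem_univ, true_and, Finset.mem_inter]
        show (BT.eval (vbool S) t ⊓ BT.eval (vbool S) u) = true ↔ _
        rw [hb, Bool.and_eq_true]
      show BT.eval v t ⊓ BT.eval v u = _
      rw [hfil, ← sup_inter_atom, iht hsub.1, ihu hsub.2]
  | not t iht =>
      have hsub : t.vars ⊆ Finset.Icc 1 n := ht
      have hfil : (Finset.univ.filter fun S : Finset (Fin n) =>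
            BT.eval (vbool S) (BT.not t) = true)
          = Finset.univ \ (Finset.univ.filter fun S => BT.eval (vbool S) t = true) := by
        ext S
        simp only [Finset.mem_filter, Finset.mem_univ, true_and, Finset.mem_sdiff]
        show ((BT.eval (vbool S) t)ᶜ = true) ↔ _
        simp
      show (BT.eval v t)ᶜ = _
      rw [hfil, ← compl_sup_atom, iht hsub]


end BoolIndepAux

open BT in
/-- Boolean Independence Theorem: if the events
`a 1, …, a n` are independent of the events `b 1, …, b n`, and `t`, `u` are
Boolean terms in the variables `X 1, …, X n`, then the event obtained by
evaluating `t` on `a 1, …, a n` (via any assignment `v` with `v i = a i` for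
`i ∈ [n]`) is independent of the event obtained by evaluating `u` on
`b 1, …, b n`. -/
theorem boolean_independence {A : Type*} [BooleanAlgebra A] (Pr : A → ℝ)
    (hPr01 : ∀ a : A, 0 ≤ Pr a ∧ Pr a ≤ 1)
    (hbot : Pr ⊥ = 0) (htop : Pr ⊤ = 1)
    (hadd : ∀ a b : A, Pr (a ⊔ b) = Pr a + Pr b - Pr (a ⊓ b))
    (n : ℕ) (hn : 1 ≤ n) (t u : BT)
    (ht : vars t ⊆ Finset.Icc 1 n) (hu : vars u ⊆ Finset.Icc 1 n)
    (a b : Fin n → A) (hindep : IndepTuples Pr a b)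
    (v w : ℕ → A)
    (hv : ∀ i : Fin n, v (i.val + 1) = a i)
    (hw : ∀ i : Fin n, w (i.val + 1) = b i) :
    Pr (eval v t ⊓ eval w u) = Pr (eval v t) * Pr (eval w u) := by
  classical
  have hev_t := BoolIndepAux.eval_normal a v hv t ht
  have hev_u := BoolIndepAux.eval_normal b w hw u hu
  set F := Finset.univ.filter fun S : Finset (Fin n) =>
    BT.eval (BoolIndepAux.vbool S) t = true with hF
  set G := Finset.univ.filter fun S : Finset (Fin n) =>
    BT.eval (BoolIndepAux.vbool S) u = true with hG
  rw [hev_t, hev_u, Finset.sup_inf_sup]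
  have hdisj : ∀ p ∈ F ×ˢ G, ∀ q ∈ F ×ˢ G, p ≠ q →
      (BoolIndepAux.atom a p.1 ⊓ BoolIndepAux.atom b p.2)
        ⊓ (BoolIndepAux.atom a q.1 ⊓ BoolIndepAux.atom b q.2) = ⊥ := by
    intro p _ q _ hpq
    by_cases h1 : p.1 = q.1
    · have h2 : p.2 ≠ q.2 := fun h => hpq (Prod.ext h1 h)
      refine le_bot_iff.1 (le_trans (inf_le_inf inf_le_right inf_le_right) ?_)
      rw [BoolIndepAux.atom_disjoint b h2]
    · refine le_bot_iff.1 (le_trans (inf_le_inf inf_le_left inf_le_left) ?_)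
      rw [BoolIndepAux.atom_disjoint a h1]
  rw [BoolIndepAux.pr_sup_disjoint Pr hbot hadd _ _ hdisj,
    BoolIndepAux.pr_sup_disjoint Pr hbot hadd F (BoolIndepAux.atom a)
      (fun i _ j _ hij => BoolIndepAux.atom_disjoint a hij),
    BoolIndepAux.pr_sup_disjoint Pr hbot hadd G (BoolIndepAux.atom b)
      (fun i _ j _ hij => BoolIndepAux.atom_disjoint b hij),
    Finset.sum_product, Finset.sum_mul_sum]
  refine Finset.sum_congr rfl fun S _ => Finset.sum_congr rfl fun T _ => ?_
  exact BoolIndepAux.indep_sgn Pr hbot hadd a b hindep Finset.univ Finset.univ S T
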